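/- arXiv:2503.00247 — 2 statements merged into one kernel-verified Lean document; each statement's English description precedes it below -/
import Mathlib

section
/- Let p be an odd prime, m ≥ 1 an integer, and r₁, r₂ natural numbers such that (p−1)·p^{m−1} divides 2(r₁ − r₂) as integers but (p−1)·p^{m−1} does not divide r₁ − r₂. Then for every unit u of ℤ/p^mℤ one has u^{r₁} = (u₀/p) · u^{r₂} in ℤ/p^mℤ, where u₀ ∈ ℤ is any integer representing u and (·/p) is the Legendre symbol cast into ℤ/p^mℤ. -/
lemma sq_eq_one_zmod_prime_pow (p m : ℕ) (hp : p.Prime) (hodd : Odd p)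
    (x : ZMod (p ^ m)) (hx : x ^ 2 = 1) : x = 1 ∨ x = -1 := by
  haveI : NeZero (p ^ m) := ⟨pow_ne_zero m hp.ne_zero⟩
  set a : ℤ := (x.val : ℤ) with ha
  have hxa : ((a : ℤ) : ZMod (p ^ m)) = x := by
    simp [ha, ZMod.natCast_val, ZMod.cast_id]
  have hdvd : ((p : ℤ) ^ m) ∣ (a - 1) * (a + 1) := by
    have : (((a - 1) * (a + 1) : ℤ) : ZMod (p ^ m)) = 0 := by
      push_cast
      rw [hxa]
      linear_combination hx
    have := (ZMod.intCast_zmod_eq_zero_iff_dvd _ _).mp this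
    exact_mod_cast this
  have hpi : Prime (p : ℤ) := Nat.prime_iff_prime_int.mp hp
  have hnot2 : ¬ (p : ℤ) ∣ 2 := by
    intro h
    have hle : (p : ℤ) ≤ 2 := Int.le_of_dvd (by norm_num) h
    have hle' : p ≤ 2 := by exact_mod_cast hle
    obtain ⟨k, hk⟩ := hodd
    have := hp.two_le
    omega
  by_cases hd : (p : ℤ) ∣ a + 1
  · right
    have hnd : ¬ (p : ℤ) ∣ a - 1 := by
      intro h
      exact hnot2 (by have := dvd_sub hd h; simpa using this)
    have hcop : IsCoprime ((p : ℤ) ^ m) (a - 1) :=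
      ((hpi.coprime_iff_not_dvd).mpr hnd).pow_left
    have : ((p : ℤ) ^ m) ∣ a + 1 := hcop.dvd_of_dvd_mul_left hdvd
    have : ((a + 1 : ℤ) : ZMod (p ^ m)) = 0 := by
      rw [ZMod.intCast_zmod_eq_zero_iff_dvd]
      exact_mod_cast this
    push_cast at this
    rw [hxa] at this
    linear_combination this
  · left
    have hcop : IsCoprime ((p : ℤ) ^ m) (a + 1) :=
      ((hpi.coprime_iff_not_dvd).mpr hd).pow_left
    have : ((p : ℤ) ^ m) ∣ a - 1 := hcop.dvd_of_dvd_mul_right hdvd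
    have : ((a - 1 : ℤ) : ZMod (p ^ m)) = 0 := by
      rw [ZMod.intCast_zmod_eq_zero_iff_dvd]
      exact_mod_cast this
    push_cast at this
    rw [hxa] at this
    linear_combination this

/-- If `(p-1)·p^{m-1} ∣ 2(r₁ - r₂)` but `(p-1)·p^{m-1} ∤ (r₁ - r₂)`, then for every unit `u`
of `ℤ/p^mℤ` with integer representative `u₀`, `u^{r₁} = (u₀/p)·u^{r₂}` in `ℤ/p^mℤ`. -/
theorem stmt_2 (p : ℕ) [Fact p.Prime] (hodd : Odd p) (m : ℕ) (hm : 1 ≤ m) (r₁ r₂ : ℕ)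
    (h1 : ((p - 1 : ℤ) * (p : ℤ) ^ (m - 1)) ∣ 2 * ((r₁ : ℤ) - (r₂ : ℤ)))
    (h2 : ¬ ((p - 1 : ℤ) * (p : ℤ) ^ (m - 1)) ∣ ((r₁ : ℤ) - (r₂ : ℤ)))
    (u : (ZMod (p ^ m))ˣ) (u₀ : ℤ) (hu₀ : (u₀ : ZMod (p ^ m)) = (u : ZMod (p ^ m))) :
    (u : ZMod (p ^ m)) ^ r₁ =
      ((legendreSym p u₀ : ℤ) : ZMod (p ^ m)) * (u : ZMod (p ^ m)) ^ r₂ := by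
  have hp := Fact.out (p := p.Prime)
  haveI : NeZero (p ^ m) := ⟨pow_ne_zero m hp.ne_zero⟩
  have hodd' := hodd
  obtain ⟨q, hq⟩ := hodd'
  have hp2 : 2 < p := by
    have := hp.two_le
    omega
  -- the group order
  have hcard : Fintype.card (ZMod (p ^ m))ˣ = (p - 1) * p ^ (m - 1) := by
    rw [ZMod.card_units_eq_totient, Nat.totient_prime_pow hp hm, mul_comm]
  have hNM : (p - 1) * p ^ (m - 1) = 2 * (q * p ^ (m - 1)) := by
    have h1 : p - 1 = 2 * q := by omega
    rw [h1]; ring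
  have hNZ : (((p - 1) * p ^ (m - 1) : ℕ) : ℤ) = ((p : ℤ) - 1) * (p : ℤ) ^ (m - 1) := by
    have h1p : (1 : ℕ) ≤ p := hp.one_lt.le
    push_cast [h1p]
    ring
  -- decompose r₁ - r₂
  obtain ⟨t, ht⟩ := h1
  rw [← hNZ] at ht h2
  have htodd : Odd t := by
    rcases Int.even_or_odd t with he | ho
    · exfalso
      obtain ⟨c, hc⟩ := he
      have h2' : 2 * ((r₁ : ℤ) - (r₂ : ℤ)) =
          2 * ((((p - 1) * p ^ (m - 1) : ℕ) : ℤ) * c) := by rw [ht, hc]; ring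
      exact h2 ⟨c, by linarith⟩
    · exact ho
  obtain ⟨k, hk⟩ := htodd
  have hNM' : (((p - 1) * p ^ (m - 1) : ℕ) : ℤ) = 2 * ((q * p ^ (m - 1) : ℕ) : ℤ) := by
    exact_mod_cast congrArg (fun n : ℕ => (n : ℤ)) hNM
  have hd : (r₁ : ℤ) - (r₂ : ℤ) =
      (((p - 1) * p ^ (m - 1) : ℕ) : ℤ) * k + ((q * p ^ (m - 1) : ℕ) : ℤ) := by
    have h2' : 2 * ((r₁ : ℤ) - (r₂ : ℤ)) =
        2 * ((((p - 1) * p ^ (m - 1) : ℕ) : ℤ) * k + ((q * p ^ (m - 1) : ℕ) : ℤ)) := by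
      rw [ht, hk, hNM']; ring
    linarith
  -- units computation
  have huN : u ^ ((p - 1) * p ^ (m - 1)) = 1 := by rw [← hcard]; exact pow_card_eq_one
  have hkey : u ^ r₁ = u ^ r₂ * u ^ (q * p ^ (m - 1)) := by
    have h' : (r₁ : ℤ) = (r₂ : ℤ) +
        ((((p - 1) * p ^ (m - 1) : ℕ) : ℤ) * k + ((q * p ^ (m - 1) : ℕ) : ℤ)) := by
      linarith [hd]
    have h0 : (u ^ r₁ : (ZMod (p ^ m))ˣ) = u ^ ((r₁ : ℕ) : ℤ) := (zpow_natCast u r₁).symm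
    rw [h0, h', zpow_add, zpow_add, zpow_mul, zpow_natCast, zpow_natCast, zpow_natCast,
      huN, one_zpow, one_mul]
  -- Legendre symbol value
  have hdvdp : (p : ℕ) ∣ p ^ m := dvd_pow_self p (by omega)
  have hu0ne : ((u₀ : ZMod p)) ≠ 0 := by
    intro h0
    have hIU : IsUnit ((ZMod.castHom hdvdp (ZMod p)) (u : ZMod (p ^ m))) :=
      (u.isUnit).map _
    rw [← hu₀, map_intCast, h0] at hIU
    exact not_isUnit_zero hIU
  have hsval : legendreSym p u₀ = 1 ∨ legendreSym p u₀ = -1 :=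
    legendreSym.eq_one_or_neg_one p hu0ne
  -- key claim
  set x : ZMod (p ^ m) := (u : ZMod (p ^ m)) ^ (q * p ^ (m - 1)) with hx
  have hxsq : x ^ 2 = 1 := by
    rw [hx, ← pow_mul, mul_comm (q * p ^ (m - 1)) 2, ← hNM,
      ← Units.val_pow_eq_pow_val, huN, Units.val_one]
  have hx1 : x = 1 ∨ x = -1 := sq_eq_one_zmod_prime_pow p m hp hodd x hxsq
  haveI : Fact (2 < p) := ⟨hp2⟩
  set φ : ZMod (p ^ m) →+* ZMod p := ZMod.castHom hdvdp (ZMod p) with hφ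
  have hφx : φ x = ((legendreSym p u₀ : ℤ) : ZMod p) := by
    have h2p : p / 2 = q := by omega
    have hpm1odd : Odd (p ^ (m - 1)) := hodd.pow
    have hstep : φ x = ((u₀ : ZMod p)) ^ (q * p ^ (m - 1)) := by
      rw [hx, map_pow, ← hu₀, map_intCast]
    rw [hstep, pow_mul, ← h2p, ← legendreSym.eq_pow]
    rcases hsval with hs | hs
    · rw [hs]; simp
    · rw [hs]
      push_cast
      rw [hpm1odd.neg_one_pow]
  have hfinal : x = ((legendreSym p u₀ : ℤ) : ZMod (p ^ m)) := by
    rcases hx1 with h | h <;> rcases hsval with hs | hs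
    · rw [h, hs]; simp
    · exfalso
      rw [h, hs] at hφx
      simp at hφx
      exact ZMod.neg_one_ne_one hφx.symm
    · exfalso
      rw [h, hs] at hφx
      simp at hφx
      exact ZMod.neg_one_ne_one hφx
    · rw [h, hs]; simp
  -- conclude
  have hc := congrArg (fun v : (ZMod (p ^ m))ˣ => (v : ZMod (p ^ m))) hkey
  simp only [Units.val_mul, Units.val_pow_eq_pow_val] at hc
  rw [hc, ← hx, hfinal, mul_comm]
end

section
/- Let p be a prime, k a field of characteristic p, and a ≥ 1 a natural number. In the formal power series ring k⟦X⟧, the X-adic order of the power series 1 − (1 + X)^a equals p^{v}, where v = v_p(a) is the p-adic valuation of a (the largest exponent with p^v dividing a). -/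
open PowerSeries Finset

/-- In characteristic `p`, the `X`-adic order of `1 - (1 + X)^a` in `k⟦X⟧` is `p^{v_p(a)}`. -/
theorem stmt_4 (p : ℕ) (hp : p.Prime) (k : Type*) [Field k] [CharP k p] (a : ℕ) (ha : 1 ≤ a) :
    PowerSeries.order (1 - (1 + PowerSeries.X : PowerSeries k) ^ a) =
      ((p ^ (padicValNat p a) : ℕ) : ℕ∞) := by
  haveI : Fact p.Prime := ⟨hp⟩
  haveI : CharP (PowerSeries k) p :=
    charP_of_injective_ringHom (PowerSeries.C_injective (R := k)) p
  set v := padicValNat p a with hv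
  set q := p ^ v with hqdef
  obtain ⟨b, hb⟩ : q ∣ a := pow_padicValNat_dvd
  have ha0 : a ≠ 0 := by omega
  have hpb : ¬ p ∣ b := by
    intro hdvd
    obtain ⟨c, hc⟩ := hdvd
    refine pow_succ_padicValNat_not_dvd (p := p) ha0 ⟨c, ?_⟩
    conv_lhs => rw [hb, hc]
    rw [hqdef, ← hv, pow_succ]
    ring
  have hb0 : b ≠ 0 := by rintro rfl; simp at hb; omega
  have hq1 : 1 ≤ q := Nat.one_le_pow _ _ hp.pos
  have key : (1 + X : k⟦X⟧) ^ a = (1 + X ^ q) ^ b := by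
    rw [hb, pow_mul, hqdef, add_pow_char_pow, one_pow]
  rw [key]
  have expand : ((1 : k⟦X⟧) + X ^ q) ^ b
      = ∑ i ∈ Finset.range (b + 1), (PowerSeries.C (R := k) (b.choose i)) * X ^ (q * i) := by
    rw [add_comm, add_pow]
    refine Finset.sum_congr rfl fun i _ => ?_
    rw [one_pow, mul_one, ← pow_mul]
    simp [mul_comm]
  rw [PowerSeries.order_eq_nat]
  constructor
  · rw [map_sub, expand, map_sum]
    have hco : ∀ i ∈ Finset.range (b+1),
        (PowerSeries.coeff (R := k) q) ((PowerSeries.C (R := k) (b.choose i)) * X ^ (q*i))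
        = if i = 1 then (b : k) else 0 := by
      intro i _
      rw [PowerSeries.coeff_C_mul, PowerSeries.coeff_X_pow]
      rcases eq_or_ne i 1 with rfl | hi
      · simp
      · have hne : q ≠ q * i := by
          rcases Nat.eq_zero_or_pos i with rfl | hi1
          · simpa using Nat.one_le_iff_ne_zero.mp hq1
          · have : 2 ≤ i := by omega
            nlinarith
        simp [hne, hi]
    rw [Finset.sum_congr rfl hco, Finset.sum_ite_eq' (Finset.range (b+1)) 1 (fun _ => (b:k))]
    have hmem : (1:ℕ) ∈ Finset.range (b+1) := by simp; omega
    rw [if_pos hmem]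
    have h1 : (PowerSeries.coeff (R := k) q) (1 : k⟦X⟧) = 0 := by
      rw [PowerSeries.coeff_one, if_neg (by omega)]
    rw [h1, zero_sub, neg_ne_zero]
    exact fun h => hpb ((CharP.cast_eq_zero_iff k p b).mp h)
  · intro i hi
    rw [map_sub, expand, map_sum]
    have hco : ∀ j ∈ Finset.range (b+1),
        (PowerSeries.coeff (R := k) i) ((PowerSeries.C (R := k) (b.choose j)) * X ^ (q*j))
        = if j = 0 ∧ i = 0 then 1 else 0 := by
      intro j _
      rw [PowerSeries.coeff_C_mul, PowerSeries.coeff_X_pow]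
      rcases Nat.eq_zero_or_pos j with rfl | hj
      · rcases eq_or_ne i 0 with rfl | h0
        · simp
        · simp [h0]
      · have hne : i ≠ q * j := by nlinarith
        have hj0 : j ≠ 0 := by omega
        simp [hne, hj0]
    rw [Finset.sum_congr rfl hco]
    rcases eq_or_ne i 0 with rfl | h0
    · simp [PowerSeries.coeff_one]
    · simp [PowerSeries.coeff_one, h0]
end
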